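/- Let R be a polynomial on ℂ² homogeneous of bidegree (p,q). Then Q⁰(R) is a homogeneous polynomial of bidegree (p+2, q−2) (interpreted as 0 when q < 2); moreover Q⁰(R) = 0 whenever p ≤ 1 or q ≤ 1. -/

import Mathlib

noncomputable section

open Complex Matrix Set

/-- Wirtinger derivative `∂/∂z` (first coordinate) of `f : ℂ × ℂ → ℂ`. -/
def wdz (f : ℂ × ℂ → ℂ) (p : ℂ × ℂ) : ℂ :=
  (fderiv ℝ f p (1, 0) - Complex.I * fderiv ℝ f p (Complex.I, 0)) / 2

/-- Wirtinger derivative `∂/∂z̄` (first coordinate). -/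
def wdzb (f : ℂ × ℂ → ℂ) (p : ℂ × ℂ) : ℂ :=
  (fderiv ℝ f p (1, 0) + Complex.I * fderiv ℝ f p (Complex.I, 0)) / 2

/-- Wirtinger derivative `∂/∂w` (second coordinate). -/
def wdw (f : ℂ × ℂ → ℂ) (p : ℂ × ℂ) : ℂ :=
  (fderiv ℝ f p (0, 1) - Complex.I * fderiv ℝ f p (0, Complex.I)) / 2

/-- Wirtinger derivative `∂/∂w̄` (second coordinate). -/
def wdwb (f : ℂ × ℂ → ℂ) (p : ℂ × ℂ) : ℂ :=
  (fderiv ℝ f p (0, 1) + Complex.I * fderiv ℝ f p (0, Complex.I)) / 2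

/-- The operator `L := -ρ_w ∂_z + ρ_z ∂_w` associated with `ρ`. -/
def Lop (ρ f : ℂ × ℂ → ℂ) : ℂ × ℂ → ℂ :=
  fun p => -(wdw ρ p) * wdz f p + wdz ρ p * wdw f p

/-- The operator `L̄ := -ρ_w̄ ∂_z̄ + ρ_z̄ ∂_w̄` associated with `ρ`. -/
def Lbar (ρ f : ℂ × ℂ → ℂ) : ℂ × ℂ → ℂ :=
  fun p => -(wdwb ρ p) * wdzb f p + wdzb ρ p * wdwb f p

/-- The function `ρ_{Z²}(L,L) = ρ_zz ρ_w² - 2 ρ_zw ρ_z ρ_w + ρ_ww ρ_z²`. -/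
def rhoZ2LL (ρ : ℂ × ℂ → ℂ) : ℂ × ℂ → ℂ :=
  fun p => wdz (wdz ρ) p * (wdw ρ p) ^ 2
    - 2 * wdw (wdz ρ) p * wdz ρ p * wdw ρ p
    + wdw (wdw ρ) p * (wdz ρ p) ^ 2

/-- The row functions of the matrix `A_n(ρ)`: for `i ≤ n` the monomial `ρ_z^i ρ_w^{n-i}`,
and for `i = n + 1 + s` (with `0 ≤ s ≤ n - 3`) the function `ρ_z^s ρ_w^{n-3-s} ρ_{Z²}(L,L)`. -/
def rowA (ρ : ℂ × ℂ → ℂ) (n i : ℕ) : ℂ × ℂ → ℂ :=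
  if i ≤ n then fun p => (wdz ρ p) ^ i * (wdw ρ p) ^ (n - i)
  else fun p => (wdz ρ p) ^ (i - (n + 1)) * (wdw ρ p) ^ (n - 3 - (i - (n + 1))) * rhoZ2LL ρ p

/-- The `(2n-1) × (2n-1)` matrix `A_n(ρ)` at the point `p`; the `(i,j)` entry is
`L̄^j` applied to the `i`-th row function, evaluated at `p`. -/
def matA (ρ : ℂ × ℂ → ℂ) (n : ℕ) (p : ℂ × ℂ) :
    Matrix (Fin (2 * n - 1)) (Fin (2 * n - 1)) ℂ :=
  fun i j => (Lbar ρ)^[(j : ℕ)] (rowA ρ n (i : ℕ)) p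

/-- The `(n+1) × (n+1)` matrix `D_n(ρ) = (L̄^j (ρ_z^k ρ_w^{n-k}))_{0 ≤ j,k ≤ n}` at `p`. -/
def matD (ρ : ℂ × ℂ → ℂ) (n : ℕ) (p : ℂ × ℂ) : Matrix (Fin (n + 1)) (Fin (n + 1)) ℂ :=
  fun k j => (Lbar ρ)^[(j : ℕ)] (fun q => (wdz ρ q) ^ (k : ℕ) * (wdw ρ q) ^ (n - (k : ℕ))) p

/-- The determinant of the complex Jacobian matrix of a map `H : ℂ² → ℂ²`
(computed via Wirtinger derivatives of the two components). -/
def detJac (H : ℂ × ℂ → ℂ × ℂ) (p : ℂ × ℂ) : ℂ :=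
  wdz (fun q => (H q).1) p * wdw (fun q => (H q).2) p
    - wdw (fun q => (H q).1) p * wdz (fun q => (H q).2) p

/-- The operator `L̄₀ := -w ∂_z̄ + z ∂_w̄` (the operator `L̄` of the sphere). -/
def Lbar0 (f : ℂ × ℂ → ℂ) : ℂ × ℂ → ℂ :=
  fun p => -p.2 * wdzb f p + p.1 * wdwb f p

/-- `Q⁰(R) := L̄₀⁴ ( w̄² R_zz - 2 z̄ w̄ R_zw + z̄² R_ww )`. -/
def Q0 (R : ℂ × ℂ → ℂ) : ℂ × ℂ → ℂ :=
  Lbar0^[4] (fun p => (starRingEnd ℂ p.2) ^ 2 * wdz (wdz R) p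
    - 2 * starRingEnd ℂ p.1 * starRingEnd ℂ p.2 * wdw (wdz R) p
    + (starRingEnd ℂ p.1) ^ 2 * wdw (wdw R) p)

/-- `R` is a homogeneous polynomial of bidegree `(p, q)` on `ℂ²`: a linear combination of
the monomials `z^{α₁} w^{α₂} z̄^{β₁} w̄^{β₂}` with `α₁ + α₂ = p` and `β₁ + β₂ = q`. -/
def IsBihom (R : ℂ × ℂ → ℂ) (p q : ℕ) : Prop :=
  ∃ c : Fin (p + 1) → Fin (q + 1) → ℂ, ∀ z w : ℂ,
    R (z, w) = ∑ a : Fin (p + 1), ∑ b : Fin (q + 1),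
      c a b * z ^ (a : ℕ) * w ^ (p - (a : ℕ)) *
        (starRingEnd ℂ z) ^ (b : ℕ) * (starRingEnd ℂ w) ^ (q - (b : ℕ))

def cm (k : ℂ) (a c b d : ℕ) : ℂ × ℂ → ℂ :=
  fun p => k * p.1 ^ a * p.2 ^ c * (starRingEnd ℂ p.1) ^ b * (starRingEnd ℂ p.2) ^ d

lemma hasFDerivAt_pow'' {f : ℂ × ℂ → ℂ} {f' : ℂ × ℂ →L[ℝ] ℂ} {x : ℂ × ℂ}
    (h : HasFDerivAt f f' x) (n : ℕ) :
    HasFDerivAt (fun p => f p ^ n) (((n : ℂ) * f x ^ (n - 1)) • f') x := by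
  induction n with
  | zero =>
    rw [show ((0:ℕ):ℂ) * f x ^ (0-1) = 0 by simp, zero_smul ℂ f']
    simpa using hasFDerivAt_const (𝕜 := ℝ) (1 : ℂ) x
  | succ m ih =>
    have H := h.fun_mul ih
    have e : (fun p => f p * f p ^ m) = fun p => f p ^ (m + 1) := by
      funext p; rw [← pow_succ']
    rw [e] at H
    have key : (((m + 1 : ℕ) : ℂ) * f x ^ (m + 1 - 1)) • f' =
        f x • ((m : ℂ) * f x ^ (m - 1)) • f' + f x ^ m • f' := by
      refine ContinuousLinearMap.ext fun v => ?_
      simp only [ContinuousLinearMap.smul_apply, ContinuousLinearMap.add_apply, smul_eq_mul,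
        Nat.add_sub_cancel, Nat.cast_add, Nat.cast_one]
      cases m with
      | zero => simp
      | succ m' =>
        simp only [Nat.add_sub_cancel, Nat.cast_add, Nat.cast_one, pow_succ]
        ring
    rw [key]; exact H

def e1 : ℂ × ℂ →L[ℝ] ℂ := ContinuousLinearMap.fst ℝ ℂ ℂ

def e2 : ℂ × ℂ →L[ℝ] ℂ := ContinuousLinearMap.snd ℝ ℂ ℂ

def cj : ℂ →L[ℝ] ℂ := Complex.conjCLE.toContinuousLinearMap

lemma cm_hasFDerivAt (k : ℂ) (a c b d : ℕ) (p : ℂ × ℂ) :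
    HasFDerivAt (cm k a c b d)
      ((k * p.2 ^ c * (starRingEnd ℂ p.1) ^ b * (starRingEnd ℂ p.2) ^ d * ((a:ℂ) * p.1 ^ (a-1))) • e1
      + (k * p.1 ^ a * (starRingEnd ℂ p.1) ^ b * (starRingEnd ℂ p.2) ^ d * ((c:ℂ) * p.2 ^ (c-1))) • e2
      + (k * p.1 ^ a * p.2 ^ c * (starRingEnd ℂ p.2) ^ d * ((b:ℂ) * (starRingEnd ℂ p.1) ^ (b-1))) • (cj.comp e1)
      + (k * p.1 ^ a * p.2 ^ c * (starRingEnd ℂ p.1) ^ b * ((d:ℂ) * (starRingEnd ℂ p.2) ^ (d-1))) • (cj.comp e2)) p := by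
  have hz : HasFDerivAt (fun q : ℂ × ℂ => q.1) e1 p := hasFDerivAt_fst
  have hw : HasFDerivAt (fun q : ℂ × ℂ => q.2) e2 p := hasFDerivAt_snd
  have hzb : HasFDerivAt (fun q : ℂ × ℂ => starRingEnd ℂ q.1) (cj.comp e1) p :=
    (Complex.conjCLE.hasFDerivAt).comp p hz
  have hwb : HasFDerivAt (fun q : ℂ × ℂ => starRingEnd ℂ q.2) (cj.comp e2) p :=
    (Complex.conjCLE.hasFDerivAt).comp p hw
  have H := ((((hasFDerivAt_const k p).mul (hasFDerivAt_pow'' hz a)).mul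
      (hasFDerivAt_pow'' hw c)).mul (hasFDerivAt_pow'' hzb b)).mul (hasFDerivAt_pow'' hwb d)
  have key :
      ((k * p.2 ^ c * (starRingEnd ℂ p.1) ^ b * (starRingEnd ℂ p.2) ^ d * ((a:ℂ) * p.1 ^ (a-1))) • e1
      + (k * p.1 ^ a * (starRingEnd ℂ p.1) ^ b * (starRingEnd ℂ p.2) ^ d * ((c:ℂ) * p.2 ^ (c-1))) • e2
      + (k * p.1 ^ a * p.2 ^ c * (starRingEnd ℂ p.2) ^ d * ((b:ℂ) * (starRingEnd ℂ p.1) ^ (b-1))) • (cj.comp e1)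
      + (k * p.1 ^ a * p.2 ^ c * (starRingEnd ℂ p.1) ^ b * ((d:ℂ) * (starRingEnd ℂ p.2) ^ (d-1))) • (cj.comp e2))
      = ((k * p.1 ^ a * p.2 ^ c * (starRingEnd ℂ p.1) ^ b) •
            ((d:ℂ) * (starRingEnd ℂ p.2) ^ (d - 1)) • cj.comp e2 +
          (starRingEnd ℂ p.2) ^ d •
            ((k * p.1 ^ a * p.2 ^ c) • ((b:ℂ) * (starRingEnd ℂ p.1) ^ (b - 1)) • cj.comp e1 +
              (starRingEnd ℂ p.1) ^ b •
                ((k * p.1 ^ a) • ((c:ℂ) * p.2 ^ (c - 1)) • e2 +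
                  p.2 ^ c • (k • ((a:ℂ) * p.1 ^ (a - 1)) • e1 + p.1 ^ a • 0)))) := by
    refine ContinuousLinearMap.ext fun v => ?_
    simp only [ContinuousLinearMap.coe_comp', Function.comp_apply, ContinuousLinearMap.add_apply, ContinuousLinearMap.smul_apply, smul_eq_mul,
      ContinuousLinearMap.zero_apply, mul_zero, add_zero, smul_zero, zero_add]
    ring
  rw [key]; exact H

lemma wdz_cm (k : ℂ) (a c b d : ℕ) : wdz (cm k a c b d) = cm (k * a) (a-1) c b d := by
  funext p
  rw [wdz, (cm_hasFDerivAt k a c b d p).fderiv]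
  simp only [ContinuousLinearMap.add_apply, ContinuousLinearMap.smul_apply, smul_eq_mul,
    ContinuousLinearMap.coe_comp', Function.comp_apply, e1, e2, cj,
    ContinuousLinearMap.coe_fst', ContinuousLinearMap.coe_snd',
    ContinuousLinearEquiv.coe_coe, Complex.conjCLE_apply, _root_.map_one, _root_.map_zero, map_ofNat,
    Complex.conj_I, mul_zero, mul_one, add_zero, zero_add, cm]
  ring_nf
  simp [Complex.I_sq]
  ring

lemma wdzb_cm (k : ℂ) (a c b d : ℕ) : wdzb (cm k a c b d) = cm (k * b) a c (b-1) d := by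
  funext p
  rw [wdzb, (cm_hasFDerivAt k a c b d p).fderiv]
  simp only [ContinuousLinearMap.add_apply, ContinuousLinearMap.smul_apply, smul_eq_mul,
    ContinuousLinearMap.coe_comp', Function.comp_apply, e1, e2, cj,
    ContinuousLinearMap.coe_fst', ContinuousLinearMap.coe_snd',
    ContinuousLinearEquiv.coe_coe, Complex.conjCLE_apply, _root_.map_one, _root_.map_zero, map_ofNat,
    Complex.conj_I, mul_zero, mul_one, add_zero, zero_add, cm]
  ring_nf
  simp [Complex.I_sq]
  ring

lemma wdw_cm (k : ℂ) (a c b d : ℕ) : wdw (cm k a c b d) = cm (k * c) a (c-1) b d := by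
  funext p
  rw [wdw, (cm_hasFDerivAt k a c b d p).fderiv]
  simp only [ContinuousLinearMap.add_apply, ContinuousLinearMap.smul_apply, smul_eq_mul,
    ContinuousLinearMap.coe_comp', Function.comp_apply, e1, e2, cj,
    ContinuousLinearMap.coe_fst', ContinuousLinearMap.coe_snd',
    ContinuousLinearEquiv.coe_coe, Complex.conjCLE_apply, _root_.map_one, _root_.map_zero, map_ofNat,
    Complex.conj_I, mul_zero, mul_one, add_zero, zero_add, cm]
  ring_nf
  simp [Complex.I_sq]
  ring

lemma wdwb_cm (k : ℂ) (a c b d : ℕ) : wdwb (cm k a c b d) = cm (k * d) a c b (d-1) := by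
  funext p
  rw [wdwb, (cm_hasFDerivAt k a c b d p).fderiv]
  simp only [ContinuousLinearMap.add_apply, ContinuousLinearMap.smul_apply, smul_eq_mul,
    ContinuousLinearMap.coe_comp', Function.comp_apply, e1, e2, cj,
    ContinuousLinearMap.coe_fst', ContinuousLinearMap.coe_snd',
    ContinuousLinearEquiv.coe_coe, Complex.conjCLE_apply, _root_.map_one, _root_.map_zero, map_ofNat,
    Complex.conj_I, mul_zero, mul_one, add_zero, zero_add, cm]
  ring_nf
  simp [Complex.I_sq]
  ring

lemma cm_diff (k : ℂ) (a c b d : ℕ) : Differentiable ℝ (cm k a c b d) :=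
  fun p => (cm_hasFDerivAt k a c b d p).differentiableAt

lemma wd_sum_aux {ι : Type*} (s : Finset ι) (g : ι → ℂ × ℂ → ℂ)
    (hg : ∀ i ∈ s, Differentiable ℝ (g i)) (p v : ℂ × ℂ) :
    fderiv ℝ (fun q => ∑ i ∈ s, g i q) p v = ∑ i ∈ s, fderiv ℝ (g i) p v := by
  rw [fderiv_fun_sum (fun i hi => (hg i hi).differentiableAt)]
  simp

lemma wdz_sum {ι : Type*} (s : Finset ι) (g : ι → ℂ × ℂ → ℂ)
    (hg : ∀ i ∈ s, Differentiable ℝ (g i)) :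
    wdz (fun q => ∑ i ∈ s, g i q) = fun p => ∑ i ∈ s, wdz (g i) p := by
  funext p
  simp only [wdz, wd_sum_aux s g hg, Finset.mul_sum, ← Finset.sum_sub_distrib, Finset.sum_div]

lemma wdzb_sum {ι : Type*} (s : Finset ι) (g : ι → ℂ × ℂ → ℂ)
    (hg : ∀ i ∈ s, Differentiable ℝ (g i)) :
    wdzb (fun q => ∑ i ∈ s, g i q) = fun p => ∑ i ∈ s, wdzb (g i) p := by
  funext p
  simp only [wdzb, wd_sum_aux s g hg, Finset.mul_sum, ← Finset.sum_add_distrib, Finset.sum_div]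

lemma wdw_sum {ι : Type*} (s : Finset ι) (g : ι → ℂ × ℂ → ℂ)
    (hg : ∀ i ∈ s, Differentiable ℝ (g i)) :
    wdw (fun q => ∑ i ∈ s, g i q) = fun p => ∑ i ∈ s, wdw (g i) p := by
  funext p
  simp only [wdw, wd_sum_aux s g hg, Finset.mul_sum, ← Finset.sum_sub_distrib, Finset.sum_div]

lemma wdwb_sum {ι : Type*} (s : Finset ι) (g : ι → ℂ × ℂ → ℂ)
    (hg : ∀ i ∈ s, Differentiable ℝ (g i)) :
    wdwb (fun q => ∑ i ∈ s, g i q) = fun p => ∑ i ∈ s, wdwb (g i) p := by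
  funext p
  simp only [wdwb, wd_sum_aux s g hg, Finset.mul_sum, ← Finset.sum_add_distrib, Finset.sum_div]

def FF (P Q : ℕ) (c : ℕ → ℕ → ℂ) : ℂ × ℂ → ℂ :=
  fun p => ∑ a ∈ Finset.range (P+1), ∑ b ∈ Finset.range (Q+1), cm (c a b) a (P-a) b (Q-b) p

lemma cm_zero (a c b d : ℕ) : cm 0 a c b d = fun _ => (0:ℂ) := by
  funext p; simp [cm]

lemma cm_congr {k k' : ℂ} (h : k = k') (a c b d : ℕ) : cm k a c b d = cm k' a c b d := by rw [h]

lemma FF_inner_diff (P Q : ℕ) (c : ℕ → ℕ → ℂ) (a : ℕ) :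
    Differentiable ℝ (fun q => ∑ b ∈ Finset.range (Q+1), cm (c a b) a (P-a) b (Q-b) q) := by
  apply Differentiable.fun_sum
  intro b _
  exact cm_diff _ _ _ _ _

lemma wdz_FF (P Q : ℕ) (c : ℕ → ℕ → ℂ) :
    wdz (FF P Q c) = fun p => ∑ a ∈ Finset.range (P+1), ∑ b ∈ Finset.range (Q+1),
      cm (c a b * a) (a-1) (P-a) b (Q-b) p := by
  unfold FF; rw [wdz_sum _ _ (fun a _ => FF_inner_diff P Q c a)]
  funext p
  refine Finset.sum_congr rfl fun a _ => ?_
  rw [wdz_sum _ _ (fun b _ => cm_diff _ _ _ _ _)]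
  refine Finset.sum_congr rfl fun b _ => ?_
  rw [wdz_cm]

lemma wdw_FF (P Q : ℕ) (c : ℕ → ℕ → ℂ) :
    wdw (FF P Q c) = fun p => ∑ a ∈ Finset.range (P+1), ∑ b ∈ Finset.range (Q+1),
      cm (c a b * (P-a : ℕ)) a (P-a-1) b (Q-b) p := by
  unfold FF; rw [wdw_sum _ _ (fun a _ => FF_inner_diff P Q c a)]
  funext p
  refine Finset.sum_congr rfl fun a _ => ?_
  rw [wdw_sum _ _ (fun b _ => cm_diff _ _ _ _ _)]
  refine Finset.sum_congr rfl fun b _ => ?_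
  rw [wdw_cm]

lemma wdzb_FF (P Q : ℕ) (c : ℕ → ℕ → ℂ) :
    wdzb (FF P Q c) = fun p => ∑ a ∈ Finset.range (P+1), ∑ b ∈ Finset.range (Q+1),
      cm (c a b * b) a (P-a) (b-1) (Q-b) p := by
  unfold FF; rw [wdzb_sum _ _ (fun a _ => FF_inner_diff P Q c a)]
  funext p
  refine Finset.sum_congr rfl fun a _ => ?_
  rw [wdzb_sum _ _ (fun b _ => cm_diff _ _ _ _ _)]
  refine Finset.sum_congr rfl fun b _ => ?_
  rw [wdzb_cm]

lemma wdwb_FF (P Q : ℕ) (c : ℕ → ℕ → ℂ) :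
    wdwb (FF P Q c) = fun p => ∑ a ∈ Finset.range (P+1), ∑ b ∈ Finset.range (Q+1),
      cm (c a b * (Q-b : ℕ)) a (P-a) b (Q-b-1) p := by
  unfold FF; rw [wdwb_sum _ _ (fun a _ => FF_inner_diff P Q c a)]
  funext p
  refine Finset.sum_congr rfl fun a _ => ?_
  rw [wdwb_sum _ _ (fun b _ => cm_diff _ _ _ _ _)]
  refine Finset.sum_congr rfl fun b _ => ?_
  rw [wdwb_cm]

lemma wdz_FF_succ (P Q : ℕ) (c : ℕ → ℕ → ℂ) :
    wdz (FF (P+1) Q c) = FF P Q (fun a b => ((a:ℂ)+1) * c (a+1) b) := by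
  rw [wdz_FF]; funext p
  rw [Finset.sum_range_succ']
  have h0 : (∑ b ∈ Finset.range (Q+1), cm (c 0 b * ((0:ℕ):ℂ)) (0-1) (P+1-0) b (Q-b) p) = 0 := by
    simp [cm]
  rw [h0, add_zero]
  unfold FF
  refine Finset.sum_congr rfl fun a _ => Finset.sum_congr rfl fun b _ => ?_
  have hk : c (a+1) b * ((a+1 : ℕ):ℂ) = ((a:ℂ)+1) * c (a+1) b := by push_cast; ring
  rw [Nat.add_sub_cancel, Nat.succ_sub_succ_eq_sub, cm_congr hk]

lemma wdzb_FF_succ (P Q : ℕ) (c : ℕ → ℕ → ℂ) :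
    wdzb (FF P (Q+1) c) = FF P Q (fun a b => ((b:ℂ)+1) * c a (b+1)) := by
  rw [wdzb_FF]; funext p
  unfold FF
  refine Finset.sum_congr rfl fun a _ => ?_
  rw [Finset.sum_range_succ']
  have h0 : cm (c a 0 * ((0:ℕ):ℂ)) a (P-a) (0-1) (Q+1-0) p = 0 := by simp [cm]
  rw [h0, add_zero]
  refine Finset.sum_congr rfl fun b _ => ?_
  have hk : c a (b+1) * ((b+1 : ℕ):ℂ) = ((b:ℂ)+1) * c a (b+1) := by push_cast; ring
  rw [Nat.add_sub_cancel, Nat.succ_sub_succ_eq_sub, cm_congr hk]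

lemma wdw_FF_succ (P Q : ℕ) (c : ℕ → ℕ → ℂ) :
    wdw (FF (P+1) Q c) = FF P Q (fun a b => ((P:ℂ)+1-(a:ℂ)) * c a b) := by
  rw [wdw_FF]; funext p
  rw [Finset.sum_range_succ]
  have h0 : (∑ b ∈ Finset.range (Q+1),
      cm (c (P+1) b * ((P+1-(P+1) : ℕ):ℂ)) (P+1) (P+1-(P+1)-1) b (Q-b) p) = 0 := by
    simp [cm]
  rw [h0, add_zero]
  unfold FF
  refine Finset.sum_congr rfl fun a ha => Finset.sum_congr rfl fun b _ => ?_
  have haP : a ≤ P := by simpa [Nat.lt_succ_iff] using ha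
  have hk : c a b * ((P+1-a : ℕ):ℂ) = ((P:ℂ)+1-(a:ℂ)) * c a b := by
    rw [Nat.cast_sub (by omega)]; push_cast; ring
  have he : P+1-a-1 = P-a := by omega
  rw [he, cm_congr hk]

lemma wdwb_FF_succ (P Q : ℕ) (c : ℕ → ℕ → ℂ) :
    wdwb (FF P (Q+1) c) = FF P Q (fun a b => ((Q:ℂ)+1-(b:ℂ)) * c a b) := by
  rw [wdwb_FF]; funext p
  unfold FF
  refine Finset.sum_congr rfl fun a _ => ?_
  rw [Finset.sum_range_succ]
  have h0 : cm (c a (Q+1) * ((Q+1-(Q+1) : ℕ):ℂ)) a (P-a) (Q+1) (Q+1-(Q+1)-1) p = 0 := by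
    simp [cm]
  rw [h0, add_zero]
  refine Finset.sum_congr rfl fun b hb => ?_
  have hbQ : b ≤ Q := by simpa [Nat.lt_succ_iff] using hb
  have hk : c a b * ((Q+1-b : ℕ):ℂ) = ((Q:ℂ)+1-(b:ℂ)) * c a b := by
    rw [Nat.cast_sub (by omega)]; push_cast; ring
  have he : Q+1-b-1 = Q-b := by omega
  rw [he, cm_congr hk]

lemma wdz_FF_zero (Q : ℕ) (c : ℕ → ℕ → ℂ) : wdz (FF 0 Q c) = fun _ => 0 := by
  rw [wdz_FF]; funext p; simp [cm]

lemma wdw_FF_zero (Q : ℕ) (c : ℕ → ℕ → ℂ) : wdw (FF 0 Q c) = fun _ => 0 := by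
  rw [wdw_FF]; funext p; simp [cm]

lemma wdzb_FF_zero (P : ℕ) (c : ℕ → ℕ → ℂ) : wdzb (FF P 0 c) = fun _ => 0 := by
  rw [wdzb_FF]; funext p; simp [cm]

lemma wdwb_FF_zero (P : ℕ) (c : ℕ → ℕ → ℂ) : wdwb (FF P 0 c) = fun _ => 0 := by
  rw [wdwb_FF]; funext p; simp [cm]

lemma FF_zero (P Q : ℕ) : FF P Q (fun _ _ => 0) = fun _ => 0 := by
  funext p; unfold FF; simp [cm]

lemma add_FF (P Q : ℕ) (c c' : ℕ → ℕ → ℂ) :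
    (fun p => FF P Q c p + FF P Q c' p) = FF P Q (fun a b => c a b + c' a b) := by
  funext p; unfold FF
  rw [← Finset.sum_add_distrib]
  refine Finset.sum_congr rfl fun a _ => ?_
  rw [← Finset.sum_add_distrib]
  refine Finset.sum_congr rfl fun b _ => ?_
  simp [cm]; ring

lemma smul_FF (k : ℂ) (P Q : ℕ) (c : ℕ → ℕ → ℂ) :
    (fun p => k * FF P Q c p) = FF P Q (fun a b => k * c a b) := by
  funext p; unfold FF
  rw [Finset.mul_sum]
  refine Finset.sum_congr rfl fun a _ => ?_
  rw [Finset.mul_sum]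
  refine Finset.sum_congr rfl fun b _ => ?_
  simp [cm]; ring

lemma mulw_FF (P Q : ℕ) (c : ℕ → ℕ → ℂ) :
    (fun p : ℂ × ℂ => p.2 * FF P Q c p)
      = FF (P+1) Q (fun a b => if a ≤ P then c a b else 0) := by
  funext p; unfold FF
  conv_rhs => rw [Finset.sum_range_succ]
  have h0 : (∑ b ∈ Finset.range (Q+1),
      cm (if P+1 ≤ P then c (P+1) b else 0) (P+1) (P+1-(P+1)) b (Q-b) p) = 0 := by
    simp [cm, Nat.not_succ_le_self]
  rw [h0, add_zero, Finset.mul_sum]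
  refine Finset.sum_congr rfl fun a ha => ?_
  rw [Finset.mul_sum]
  refine Finset.sum_congr rfl fun b _ => ?_
  have haP : a ≤ P := by simpa [Nat.lt_succ_iff] using ha
  have he : P+1-a = (P-a)+1 := by omega
  simp only [if_pos haP, he]
  simp [cm, pow_succ]; ring

lemma mulz_FF (P Q : ℕ) (c : ℕ → ℕ → ℂ) :
    (fun p : ℂ × ℂ => p.1 * FF P Q c p)
      = FF (P+1) Q (fun a b => if a = 0 then 0 else c (a-1) b) := by
  funext p; unfold FF
  conv_rhs => rw [Finset.sum_range_succ']
  have h0 : (∑ b ∈ Finset.range (Q+1),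
      cm (if (0:ℕ) = 0 then 0 else c (0-1) b) 0 (P+1-0) b (Q-b) p) = 0 := by
    simp [cm]
  rw [h0, add_zero, Finset.mul_sum]
  refine Finset.sum_congr rfl fun a ha => ?_
  rw [Finset.mul_sum]
  refine Finset.sum_congr rfl fun b _ => ?_
  simp only [Nat.succ_ne_zero, if_false, Nat.add_sub_cancel, Nat.succ_sub_succ_eq_sub]
  simp [cm, pow_succ]; ring

lemma mulwb_FF (P Q : ℕ) (c : ℕ → ℕ → ℂ) :
    (fun p : ℂ × ℂ => starRingEnd ℂ p.2 * FF P Q c p)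
      = FF P (Q+1) (fun a b => if b ≤ Q then c a b else 0) := by
  funext p; unfold FF
  rw [Finset.mul_sum]
  refine Finset.sum_congr rfl fun a _ => ?_
  conv_rhs => rw [Finset.sum_range_succ]
  have h0 : cm (if Q+1 ≤ Q then c a (Q+1) else 0) a (P-a) (Q+1) (Q+1-(Q+1)) p = 0 := by
    simp [cm, Nat.not_succ_le_self]
  rw [h0, add_zero, Finset.mul_sum]
  refine Finset.sum_congr rfl fun b hb => ?_
  have hbQ : b ≤ Q := by simpa [Nat.lt_succ_iff] using hb
  have he : Q+1-b = (Q-b)+1 := by omega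
  simp only [if_pos hbQ, he]
  simp [cm, pow_succ]; ring

lemma mulzb_FF (P Q : ℕ) (c : ℕ → ℕ → ℂ) :
    (fun p : ℂ × ℂ => starRingEnd ℂ p.1 * FF P Q c p)
      = FF P (Q+1) (fun a b => if b = 0 then 0 else c a (b-1)) := by
  funext p; unfold FF
  rw [Finset.mul_sum]
  refine Finset.sum_congr rfl fun a _ => ?_
  conv_rhs => rw [Finset.sum_range_succ']
  have h0 : cm (if (0:ℕ) = 0 then 0 else c a (0-1)) a (P-a) 0 (Q+1-0) p = 0 := by
    simp [cm]
  rw [h0, add_zero, Finset.mul_sum]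
  refine Finset.sum_congr rfl fun b _ => ?_
  simp only [Nat.succ_ne_zero, if_false, Nat.add_sub_cancel, Nat.succ_sub_succ_eq_sub]
  simp [cm, pow_succ]; ring

def BH (P Q : ℕ) (f : ℂ × ℂ → ℂ) : Prop := ∃ c, f = FF P Q c

lemma bh_zero (P Q : ℕ) : BH P Q (fun _ => 0) := ⟨fun _ _ => 0, (FF_zero P Q).symm⟩

lemma bh_wdz {P Q : ℕ} {f} (h : BH (P+1) Q f) : BH P Q (wdz f) := by
  obtain ⟨c, rfl⟩ := h; exact ⟨_, wdz_FF_succ P Q c⟩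

lemma bh_wdw {P Q : ℕ} {f} (h : BH (P+1) Q f) : BH P Q (wdw f) := by
  obtain ⟨c, rfl⟩ := h; exact ⟨_, wdw_FF_succ P Q c⟩

lemma bh_wdz_zero {Q : ℕ} {f} (h : BH 0 Q f) : wdz f = fun _ => 0 := by
  obtain ⟨c, rfl⟩ := h; exact wdz_FF_zero Q c

lemma bh_wdw_zero {Q : ℕ} {f} (h : BH 0 Q f) : wdw f = fun _ => 0 := by
  obtain ⟨c, rfl⟩ := h; exact wdw_FF_zero Q c

lemma bh_add {P Q : ℕ} {f g} (hf : BH P Q f) (hg : BH P Q g) :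
    BH P Q (fun p => f p + g p) := by
  obtain ⟨c, rfl⟩ := hf; obtain ⟨c', rfl⟩ := hg; exact ⟨_, add_FF P Q c c'⟩

lemma bh_smul {P Q : ℕ} (k : ℂ) {f} (hf : BH P Q f) : BH P Q (fun p => k * f p) := by
  obtain ⟨c, rfl⟩ := hf; exact ⟨_, smul_FF k P Q c⟩

lemma bh_mulzb {P Q : ℕ} {f} (hf : BH P Q f) :
    BH P (Q+1) (fun p => starRingEnd ℂ p.1 * f p) := by
  obtain ⟨c, rfl⟩ := hf; exact ⟨_, mulzb_FF P Q c⟩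

lemma bh_mulwb {P Q : ℕ} {f} (hf : BH P Q f) :
    BH P (Q+1) (fun p => starRingEnd ℂ p.2 * f p) := by
  obtain ⟨c, rfl⟩ := hf; exact ⟨_, mulwb_FF P Q c⟩

lemma bh_mulz {P Q : ℕ} {f} (hf : BH P Q f) : BH (P+1) Q (fun p => p.1 * f p) := by
  obtain ⟨c, rfl⟩ := hf; exact ⟨_, mulz_FF P Q c⟩

lemma bh_mulw {P Q : ℕ} {f} (hf : BH P Q f) : BH (P+1) Q (fun p => p.2 * f p) := by
  obtain ⟨c, rfl⟩ := hf; exact ⟨_, mulw_FF P Q c⟩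

lemma bh_wdzb {P Q : ℕ} {f} (h : BH P (Q+1) f) : BH P Q (wdzb f) := by
  obtain ⟨c, rfl⟩ := h; exact ⟨_, wdzb_FF_succ P Q c⟩

lemma bh_wdwb {P Q : ℕ} {f} (h : BH P (Q+1) f) : BH P Q (wdwb f) := by
  obtain ⟨c, rfl⟩ := h; exact ⟨_, wdwb_FF_succ P Q c⟩

lemma bh_Lbar0 {P Q : ℕ} {f} (h : BH P (Q+1) f) : BH (P+1) Q (Lbar0 f) := by
  have h1 : BH (P+1) Q (fun p : ℂ × ℂ => (-1 : ℂ) * (p.2 * wdzb f p)) :=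
    bh_smul _ (bh_mulw (bh_wdzb h))
  have h2 : BH (P+1) Q (fun p : ℂ × ℂ => p.1 * wdwb f p) := bh_mulz (bh_wdwb h)
  have h3 := bh_add h1 h2
  have e : Lbar0 f = fun p => (-1 : ℂ) * (p.2 * wdzb f p) + p.1 * wdwb f p := by
    funext p; unfold Lbar0; ring
  rw [e]; exact h3

lemma bh_Lbar0_zero {P : ℕ} {f} (h : BH P 0 f) : Lbar0 f = fun _ => 0 := by
  obtain ⟨c, rfl⟩ := h
  funext p
  unfold Lbar0
  rw [wdzb_FF_zero, wdwb_FF_zero]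
  simp

lemma wdzb_zerofun : wdzb (fun _ => (0:ℂ)) = fun _ => 0 := by
  funext p; simp [wdzb]

lemma wdwb_zerofun : wdwb (fun _ => (0:ℂ)) = fun _ => 0 := by
  funext p; simp [wdwb]

lemma wdz_zerofun : wdz (fun _ => (0:ℂ)) = fun _ => 0 := by
  funext p; simp [wdz]

lemma wdw_zerofun : wdw (fun _ => (0:ℂ)) = fun _ => 0 := by
  funext p; simp [wdw]

lemma Lbar0_zerofun : Lbar0 (fun _ => (0:ℂ)) = fun _ => 0 := by
  funext p; unfold Lbar0; rw [wdzb_zerofun, wdwb_zerofun]; simp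

lemma Lbar0_iter_zerofun (n : ℕ) : Lbar0^[n] (fun _ => (0:ℂ)) = fun _ => 0 := by
  induction n with
  | zero => rfl
  | succ m ih => rw [Function.iterate_succ_apply', ih, Lbar0_zerofun]

def Gfun (R : ℂ × ℂ → ℂ) : ℂ × ℂ → ℂ :=
  fun p => (starRingEnd ℂ p.2) ^ 2 * wdz (wdz R) p
    - 2 * starRingEnd ℂ p.1 * starRingEnd ℂ p.2 * wdw (wdz R) p
    + (starRingEnd ℂ p.1) ^ 2 * wdw (wdw R) p

lemma Q0_eq (R : ℂ × ℂ → ℂ) : Q0 R = Lbar0 (Lbar0 (Lbar0 (Lbar0 (Gfun R)))) := rfl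

lemma isbihom_of_bh {P Q : ℕ} {f} (h : BH P Q f) : IsBihom f P Q := by
  obtain ⟨c, rfl⟩ := h
  refine ⟨fun a b => c a b, fun z w => ?_⟩
  unfold FF
  rw [← Fin.sum_univ_eq_sum_range
    (fun a => ∑ b ∈ Finset.range (Q+1), cm (c a b) a (P-a) b (Q-b) (z, w)) (P+1)]
  refine Finset.sum_congr rfl fun a _ => ?_
  rw [← Fin.sum_univ_eq_sum_range
    (fun b => cm (c (a:ℕ) b) (a:ℕ) (P-(a:ℕ)) b (Q-b) (z, w)) (Q+1)]
  refine Finset.sum_congr rfl fun b _ => ?_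
  rfl

lemma bh_of_isbihom {P Q : ℕ} {f} (h : IsBihom f P Q) : BH P Q f := by
  obtain ⟨c, hc⟩ := h
  refine ⟨fun a b => if hab : a < P + 1 ∧ b < Q + 1 then c ⟨a, hab.1⟩ ⟨b, hab.2⟩ else 0, ?_⟩
  funext pt
  obtain ⟨z, w⟩ := pt
  rw [hc z w]
  unfold FF
  rw [← Fin.sum_univ_eq_sum_range
    (fun a => ∑ b ∈ Finset.range (Q+1),
      cm (if hab : a < P + 1 ∧ b < Q + 1 then c ⟨a, hab.1⟩ ⟨b, hab.2⟩ else 0)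
        a (P-a) b (Q-b) (z, w)) (P+1)]
  refine Finset.sum_congr rfl fun a _ => ?_
  rw [← Fin.sum_univ_eq_sum_range
    (fun b => cm (if hab : (a:ℕ) < P + 1 ∧ b < Q + 1 then c ⟨(a:ℕ), hab.1⟩ ⟨b, hab.2⟩ else 0)
      (a:ℕ) (P-(a:ℕ)) b (Q-b) (z, w)) (Q+1)]
  refine Finset.sum_congr rfl fun b _ => ?_
  rw [dif_pos ⟨a.isLt, b.isLt⟩]
  simp only [Fin.eta]
  rfl

lemma bh_G {P Q : ℕ} {R} (h : BH (P+2) Q R) : BH P (Q+2) (Gfun R) := by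
  have h' : BH (P+1+1) Q R := h
  have hA : BH P Q (wdz (wdz R)) := bh_wdz (bh_wdz h')
  have hB : BH P Q (wdw (wdz R)) := bh_wdw (bh_wdz h')
  have hC : BH P Q (wdw (wdw R)) := bh_wdw (bh_wdw h')
  have t1 : BH P (Q+2) (fun p : ℂ × ℂ =>
      starRingEnd ℂ p.2 * (starRingEnd ℂ p.2 * wdz (wdz R) p)) :=
    bh_mulwb (bh_mulwb hA)
  have t2 : BH P (Q+2) (fun p : ℂ × ℂ =>
      (-2 : ℂ) * (starRingEnd ℂ p.1 * (starRingEnd ℂ p.2 * wdw (wdz R) p))) :=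
    bh_smul _ (bh_mulzb (bh_mulwb hB))
  have t3 : BH P (Q+2) (fun p : ℂ × ℂ =>
      starRingEnd ℂ p.1 * (starRingEnd ℂ p.1 * wdw (wdw R) p)) :=
    bh_mulzb (bh_mulzb hC)
  have hsum := bh_add t1 (bh_add t2 t3)
  have e : Gfun R = fun p : ℂ × ℂ =>
      starRingEnd ℂ p.2 * (starRingEnd ℂ p.2 * wdz (wdz R) p)
      + ((-2 : ℂ) * (starRingEnd ℂ p.1 * (starRingEnd ℂ p.2 * wdw (wdz R) p))
        + starRingEnd ℂ p.1 * (starRingEnd ℂ p.1 * wdw (wdw R) p)) := by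
    funext p; unfold Gfun; ring
  rw [e]; exact hsum

lemma Gfun_zero_of_low {P Q : ℕ} {R} (h : BH P Q R) (hP : P ≤ 1) :
    Gfun R = fun _ => 0 := by
  have hA : (wdz (wdz R) = fun _ => 0) ∧ (wdw (wdz R) = fun _ => 0) ∧
      (wdw (wdw R) = fun _ => 0) := by
    interval_cases P
    · rw [bh_wdz_zero h, bh_wdw_zero h, wdz_zerofun, wdw_zerofun]
      exact ⟨rfl, rfl, rfl⟩
    · have h' : BH (0+1) Q R := h
      exact ⟨bh_wdz_zero (bh_wdz h'), bh_wdw_zero (bh_wdz h'), bh_wdw_zero (bh_wdw h')⟩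
  obtain ⟨ez1, ez2, ez3⟩ := hA
  funext p
  unfold Gfun
  rw [ez1, ez2, ez3]
  simp

/-- If `R` is homogeneous of bidegree `(p, q)`, then `Q⁰(R)` is homogeneous of bidegree
`(p+2, q-2)`, and `Q⁰(R) = 0` whenever `p ≤ 1` or `q ≤ 1`. -/
theorem Q0_of_bihom (R : ℂ × ℂ → ℂ) (p q : ℕ) (h : IsBihom R p q) :
    IsBihom (Q0 R) (p + 2) (q - 2) ∧ ((p ≤ 1 ∨ q ≤ 1) → ∀ Z, Q0 R Z = 0) := by
  have hBH : BH p q R := bh_of_isbihom h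
  by_cases hp : p ≤ 1
  · have hG : Gfun R = fun _ => 0 := Gfun_zero_of_low hBH hp
    have hQ : Q0 R = fun _ => 0 := by
      rw [Q0_eq, hG, Lbar0_zerofun, Lbar0_zerofun, Lbar0_zerofun, Lbar0_zerofun]
    exact ⟨by rw [hQ]; exact isbihom_of_bh (bh_zero _ _), fun _ Z => by rw [hQ]⟩
  · push_neg at hp
    obtain ⟨p', rfl⟩ : ∃ p', p = p' + 2 := ⟨p - 2, by omega⟩
    have hG : BH p' (q + 2) (Gfun R) := bh_G hBH
    by_cases hq : q ≤ 1
    · have hQ : Q0 R = fun _ => 0 := by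
        interval_cases q
        · have h1 : BH (p'+1) 1 (Lbar0 (Gfun R)) := bh_Lbar0 hG
          have h2 : BH (p'+2) 0 (Lbar0 (Lbar0 (Gfun R))) := bh_Lbar0 h1
          rw [Q0_eq, bh_Lbar0_zero h2, Lbar0_zerofun]
        · have h1 : BH (p'+1) 2 (Lbar0 (Gfun R)) := bh_Lbar0 hG
          have h2 : BH (p'+2) 1 (Lbar0 (Lbar0 (Gfun R))) := bh_Lbar0 h1
          have h3 : BH (p'+3) 0 (Lbar0 (Lbar0 (Lbar0 (Gfun R)))) := bh_Lbar0 h2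
          rw [Q0_eq, bh_Lbar0_zero h3]
      exact ⟨by rw [hQ]; exact isbihom_of_bh (bh_zero _ _), fun _ Z => by rw [hQ]⟩
    · push_neg at hq
      obtain ⟨q', rfl⟩ : ∃ q', q = q' + 2 := ⟨q - 2, by omega⟩
      have h1 : BH (p'+1) (q'+3) (Lbar0 (Gfun R)) := bh_Lbar0 hG
      have h2 : BH (p'+2) (q'+2) (Lbar0 (Lbar0 (Gfun R))) := bh_Lbar0 h1
      have h3 : BH (p'+3) (q'+1) (Lbar0 (Lbar0 (Lbar0 (Gfun R)))) := bh_Lbar0 h2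
      have h4 : BH (p'+4) q' (Lbar0 (Lbar0 (Lbar0 (Lbar0 (Gfun R))))) := bh_Lbar0 h3
      constructor
      · have : IsBihom (Lbar0 (Lbar0 (Lbar0 (Lbar0 (Gfun R))))) (p'+4) q' :=
          isbihom_of_bh h4
        rw [Q0_eq]
        exact this
      · intro hor
        exfalso
        rcases hor with h' | h' <;> omega
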